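/- Let (G_n) be a simple random walk on ℤ with G_0 = 0, up-probability α ∈ (0, 1/2), down-probability 1−α. The probability that G_m ≥ 0 for some m ≥ n equals Σ_{v=0, n+v even}^{n} Bin(α,n,(n+v)/2) + Σ_{v=1, n−v even}^{n} Bin(1−α,n,(n−v)/2), where Bin(p,n,k) = C(n,k)p^k(1−p)^{n−k}. -/

import Mathlib

open MeasureTheory ProbabilityTheory Finset Filter

set_option linter.unusedSectionVars false
set_option linter.unusedVariables false
set_option maxHeartbeats 1000000

namespace SSLE

def bval (b : Bool) : ℤ := if b then 1 else -1
def bp (α : ℝ) (b : Bool) : ℝ := if b then α else 1 - α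
def psum (δ : ℕ → Bool) (j : ℕ) : ℤ := ∑ i ∈ Finset.range j, bval (δ i)
def ucnt (δ : ℕ → Bool) (j : ℕ) : ℕ := ((Finset.range j).filter (fun l => δ l = true)).card
def ext (k : ℕ) (δ : Fin k → Bool) : ℕ → Bool := fun l => if h : l < k then δ ⟨l, h⟩ else false


lemma bval_le (b : Bool) : bval b ≤ 1 := by cases b <;> simp [bval]
lemma psum_succ (δ : ℕ → Bool) (j : ℕ) : psum δ (j+1) = psum δ j + bval (δ j) :=
  Finset.sum_range_succ _ _
lemma psum_zero (δ : ℕ → Bool) : psum δ 0 = 0 := rfl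

lemma psum_congr {δ δ' : ℕ → Bool} {k : ℕ} (h : ∀ l < k, δ l = δ' l) {j : ℕ} (hj : j ≤ k) :
    psum δ j = psum δ' j := by
  unfold psum
  exact Finset.sum_congr rfl fun l hl => by
    rw [h l (lt_of_lt_of_le (Finset.mem_range.1 hl) hj)]

lemma psum_flip (δ : ℕ → Bool) (j : ℕ) : psum (fun l => !(δ l)) j = - psum δ j := by
  unfold psum
  rw [← Finset.sum_neg_distrib]
  exact Finset.sum_congr rfl fun l _ => by cases h : δ l <;> simp [bval, h]

lemma ucnt_flip (δ : ℕ → Bool) (j : ℕ) : ucnt (fun l => !(δ l)) j = j - ucnt δ j := by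
  classical
  unfold ucnt
  have h := Finset.card_filter_add_card_filter_not (s := Finset.range j)
      (p := fun l => δ l = true)
  rw [Finset.card_range] at h
  have : (Finset.range j).filter (fun l => (!(δ l)) = true)
      = (Finset.range j).filter (fun l => ¬ (δ l = true)) := by
    apply Finset.filter_congr; intro l _; cases δ l <;> simp
  rw [this]; omega

lemma prod_bp (α : ℝ) (δ : ℕ → Bool) (j : ℕ) :
    ∏ l ∈ Finset.range j, bp α (δ l) = α ^ (ucnt δ j) * (1-α) ^ (j - ucnt δ j) := by
  classical
  unfold bp ucnt
  rw [show (fun l => if δ l then α else 1 - α) = fun l => if δ l = true then α else 1-α by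
    funext l; cases δ l <;> simp]
  rw [Finset.prod_ite, Finset.prod_const, Finset.prod_const]
  congr 2
  have h := Finset.card_filter_add_card_filter_not (s := Finset.range j)
      (p := fun l => δ l = true)
  rw [Finset.card_range] at h
  omega

lemma ucnt_le (δ : ℕ → Bool) (j : ℕ) : ucnt δ j ≤ j := by
  classical
  have h := Finset.card_filter_add_card_filter_not (s := Finset.range j)
      (p := fun l => δ l = true)
  rw [Finset.card_range] at h
  unfold ucnt; omega

/-- key real identity: weight of a path ending at `w` vs its flip. -/
lemma prod_bp_flip {α : ℝ} (hα0 : 0 < α) (hα1 : α < 1) (δ : ℕ → Bool) (i w : ℕ)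
    (h : psum δ i = (w : ℤ)) :
    ∏ l ∈ Finset.range i, bp α (δ l)
      = (α / (1-α))^w * ∏ l ∈ Finset.range i, bp α (!(δ l)) := by
  have hne : (1:ℝ) - α ≠ 0 := by linarith
  rw [prod_bp, prod_bp, ucnt_flip]
  have hle := ucnt_le δ i
  have hpc : psum δ i = 2 * (ucnt δ i : ℤ) - i := by
    classical
    unfold psum ucnt
    rw [show (fun l => bval (δ l)) = fun l => if δ l = true then (1:ℤ) else -1 by
      funext l; cases δ l <;> simp [bval]]
    rw [Finset.sum_ite, Finset.sum_const, Finset.sum_const]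
    have hc := Finset.card_filter_add_card_filter_not (s := Finset.range i)
        (p := fun l => δ l = true)
    rw [Finset.card_range] at hc
    simp only [smul_eq_mul, mul_one, mul_neg_one, nsmul_eq_mul]
    have h2 : ((Finset.range i).filter (fun l => ¬ δ l = true)).card
        = i - ((Finset.range i).filter (fun l => δ l = true)).card := by omega
    rw [h2]
    have h3 : ((Finset.range i).filter (fun l => δ l = true)).card ≤ i := by omega
    push_cast [Nat.cast_sub h3]
    ring
  rw [hpc] at h
  set u := ucnt δ i with hu
  set d := i - u with hd
  have hud : u = d + w := by omega
  have hid : i - d = u := by omega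
  rw [hid, hud]
  rw [div_pow]
  field_simp
  ring

lemma psum_eq_ucnt (δ : ℕ → Bool) (j : ℕ) :
    psum δ j = 2 * (ucnt δ j : ℤ) - j := by
  classical
  unfold psum ucnt
  rw [show (fun l => bval (δ l)) = fun l => if δ l = true then (1:ℤ) else -1 by
    funext l; cases δ l <;> simp [bval]]
  rw [Finset.sum_ite, Finset.sum_const, Finset.sum_const]
  have h := Finset.card_filter_add_card_filter_not (s := Finset.range j)
      (p := fun l => δ l = true)
  rw [Finset.card_range] at h
  have h3 : ((Finset.range j).filter (fun l => δ l = true)).card ≤ j := by omega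
  simp only [smul_eq_mul, mul_one, mul_neg_one, nsmul_eq_mul]
  have h2 : ((Finset.range j).filter (fun l => ¬ δ l = true)).card
      = j - ((Finset.range j).filter (fun l => δ l = true)).card := by omega
  rw [h2]
  push_cast [Nat.cast_sub h3]
  ring


/-- first strict crossing of level `v ≥ 1` is exact. -/
lemma psum_first_eq {δ : ℕ → Bool} {i : ℕ} {v : ℤ} (hv : 1 ≤ v)
    (h1 : v ≤ psum δ i) (h2 : ∀ l < i, psum δ l < v) : psum δ i = v := by
  cases i with
  | zero => simp [psum_zero] at h1; omega
  | succ l =>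
    have hl := h2 l (Nat.lt_succ_self l)
    have hb := bval_le (δ l)
    rw [psum_succ] at h1 ⊢
    omega


lemma ucnt_ext (n : ℕ) (δ : Fin n → Bool) :
    ucnt (fun i => if h : i < n then δ ⟨i,h⟩ else false) n
      = (Finset.univ.filter (fun i : Fin n => δ i = true)).card := by
  classical
  unfold ucnt
  apply Finset.card_bij (fun (l : ℕ) (hl : l ∈ (Finset.range n).filter _) =>
    (⟨l, by simpa using (Finset.mem_filter.1 hl).1⟩ : Fin n))
  · intro a ha
    have h := Finset.mem_filter.1 ha
    have h1 : a < n := by simpa using h.1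
    have h2 := h.2
    simp only [dif_pos h1] at h2
    simp [h2]
  · intro a ha b hb hab
    simpa [Fin.ext_iff] using hab
  · intro b hb
    refine ⟨b.1, Finset.mem_filter.2 ⟨by simp [b.2], ?_⟩, by simp⟩
    simp only [dif_pos b.2]
    simpa using (Finset.mem_filter.1 hb).2

lemma card_ucnt_eq (n u : ℕ) :
    (Finset.univ.filter (fun δ : Fin n → Bool =>
      ucnt (fun i => if h : i < n then δ ⟨i,h⟩ else false) n = u)).card
      = n.choose u := by
  classical
  have : ∀ δ : Fin n → Bool,
      ucnt (fun i => if h : i < n then δ ⟨i,h⟩ else false) n = u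
        ↔ (Finset.univ.filter (fun i : Fin n => δ i = true)).card = u := by
    intro δ; rw [ucnt_ext]
  rw [Finset.filter_congr (fun δ _ => by rw [this δ])]
  have hcard : n.choose u = (Finset.powersetCard u (Finset.univ : Finset (Fin n))).card := by
    rw [Finset.card_powersetCard, Finset.card_univ, Fintype.card_fin]
  rw [hcard]
  apply Finset.card_bij' (fun δ _ => Finset.univ.filter (fun i : Fin n => δ i = true))
    (fun s _ => fun i => decide (i ∈ s))
  · intro δ hδ
    simp only [Finset.mem_powersetCard]
    exact ⟨Finset.filter_subset _ _, by simpa using (Finset.mem_filter.1 hδ).2⟩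
  · intro s hs
    simp only [Finset.mem_filter, Finset.mem_univ, true_and]
    have : Finset.univ.filter (fun i : Fin n => decide (i ∈ s) = true) = s := by
      ext i; simp
    rw [this]
    simpa using (Finset.mem_powersetCard.1 hs).2
  · intro δ hδ; funext i; simp
  · intro s hs; ext i; simp


lemma psum_split (δ : ℕ → Bool) (n j : ℕ) :
    psum δ (n + j) = psum δ n + psum (fun i => δ (n + i)) j := by
  unfold psum
  exact Finset.sum_range_add _ n j

lemma card_ucnt_eq_ext (n u : ℕ) :
    (Finset.univ.filter (fun δ : Fin n → Bool => ucnt (ext n δ) n = u)).card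
      = n.choose u := card_ucnt_eq n u

lemma case2_weight {α : ℝ} (hα0 : 0 < α) (hα1 : α < 1) {n u : ℕ} (h : 2 * u < n) :
    α ^ u * (1-α) ^ (n - u) * (α / (1-α)) ^ (n - 2*u) = α ^ (n - u) * (1-α) ^ u := by
  have hne : (1:ℝ) - α ≠ 0 := by linarith
  set w := n - 2*u with hw
  rw [show n - u = u + w by omega]
  rw [pow_add, pow_add, div_pow]
  field_simp

lemma final_algebra (α : ℝ) (n : ℕ) :
    ∑ ε ∈ (Finset.univ : Finset (Fin n → Bool)),
      (if n ≤ 2 * ucnt (ext n ε) n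
        then α ^ (ucnt (ext n ε) n) * (1-α) ^ (n - ucnt (ext n ε) n)
        else α ^ (n - ucnt (ext n ε) n) * (1-α) ^ (ucnt (ext n ε) n))
    = (∑ v ∈ Finset.range (n + 1),
          if Even (n + v) then
            (n.choose ((n + v) / 2) : ℝ) * α ^ ((n + v) / 2) * (1 - α) ^ (n - (n + v) / 2)
          else 0)
      + (∑ v ∈ Finset.Icc 1 n,
          if Even (n - v) then
            (n.choose ((n - v) / 2) : ℝ) * (1 - α) ^ ((n - v) / 2) * α ^ (n - (n - v) / 2)
          else 0) := by
  classical
  set F : ℕ → ℝ := fun u => if n ≤ 2 * u then α ^ u * (1-α) ^ (n - u)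
    else α ^ (n - u) * (1-α) ^ u with hF
  have hgroup : ∑ ε ∈ (Finset.univ : Finset (Fin n → Bool)), F (ucnt (ext n ε) n)
      = ∑ u ∈ Finset.range (n + 1), (n.choose u : ℝ) * F u := by
    rw [← Finset.sum_fiberwise_of_maps_to (t := Finset.range (n+1))
      (g := fun ε : Fin n → Bool => ucnt (ext n ε) n)
      (fun ε _ => Finset.mem_range.2 (Nat.lt_succ_of_le (ucnt_le _ _))) ]
    refine Finset.sum_congr rfl fun u _ => ?_
    rw [Finset.sum_congr rfl (fun ε hε => by
      rw [(Finset.mem_filter.1 hε).2]), Finset.sum_const, card_ucnt_eq_ext n u,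
      nsmul_eq_mul]
  rw [hgroup]
  have hsplit : ∑ u ∈ Finset.range (n + 1), (n.choose u : ℝ) * F u
      = (∑ u ∈ (Finset.range (n+1)).filter (fun u => n ≤ 2 * u),
          (n.choose u : ℝ) * (α ^ u * (1-α) ^ (n - u)))
        + ∑ u ∈ (Finset.range (n+1)).filter (fun u => ¬ n ≤ 2 * u),
          (n.choose u : ℝ) * (α ^ (n - u) * (1-α) ^ u) := by
    rw [← Finset.sum_ite ]
    refine Finset.sum_congr rfl fun u _ => ?_
    rw [hF]
    by_cases h : n ≤ 2 * u <;> simp [h]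
  rw [hsplit]
  congr 1
  · rw [← Finset.sum_filter]
    refine Finset.sum_nbij' (i := fun u => 2 * u - n) (j := fun v => (n + v) / 2)
      ?_ ?_ ?_ ?_ ?_
    · intro u hu
      simp only [Finset.mem_filter, Finset.mem_range] at hu ⊢
      refine ⟨by omega, ?_⟩
      rw [Nat.even_iff]; omega
    · intro v hv
      simp only [Finset.mem_filter, Finset.mem_range] at hv ⊢
      rw [Nat.even_iff] at hv
      omega
    · intro u hu
      simp only [Finset.mem_filter, Finset.mem_range] at hu
      omega
    · intro v hv
      simp only [Finset.mem_filter, Finset.mem_range] at hv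
      rw [Nat.even_iff] at hv
      omega
    · intro u hu
      simp only [Finset.mem_filter, Finset.mem_range] at hu
      have h1 : (n + (2 * u - n)) / 2 = u := by omega
      rw [h1]; ring
  · rw [← Finset.sum_filter]
    refine Finset.sum_nbij' (i := fun u => n - 2 * u) (j := fun v => (n - v) / 2)
      ?_ ?_ ?_ ?_ ?_
    · intro u hu
      simp only [Finset.mem_filter, Finset.mem_range, Finset.mem_Icc] at hu ⊢
      refine ⟨by omega, ?_⟩
      rw [Nat.even_iff]; omega
    · intro v hv
      simp only [Finset.mem_filter, Finset.mem_range, Finset.mem_Icc] at hv ⊢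
      rw [Nat.even_iff] at hv
      omega
    · intro u hu
      simp only [Finset.mem_filter, Finset.mem_range] at hu
      omega
    · intro v hv
      simp only [Finset.mem_filter, Finset.mem_Icc] at hv
      rw [Nat.even_iff] at hv
      omega
    · intro u hu
      simp only [Finset.mem_filter, Finset.mem_range] at hu
      have h1 : (n - (n - 2 * u)) / 2 = u := by omega
      rw [h1]; ring


section
variable {Ω : Type*} [MeasureSpace Ω] [IsProbabilityMeasure (ℙ : Measure Ω)]
  {α : ℝ} {step : ℕ → Ω → ℤ}

def pat (step : ℕ → Ω → ℤ) (ω : Ω) (i : ℕ) : Bool := decide (step i ω = 1)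


lemma measurable_pat (hmeas : ∀ i, Measurable (step i)) (i : ℕ) :
    Measurable (fun ω => pat step ω i) := by
  have : (fun ω => pat step ω i) = (fun z : ℤ => decide (z = 1)) ∘ step i := rfl
  rw [this]
  exact Measurable.of_discrete.comp (hmeas i)

lemma measurableSet_pat (hmeas : ∀ i, Measurable (step i)) (i : ℕ) (b : Bool) :
    MeasurableSet {ω | pat step ω i = b} :=
  measurable_pat hmeas i (measurableSet_singleton b)


lemma meas_pat_true (hup : ∀ i, ℙ {ω | step i ω = 1} = ENNReal.ofReal α) (i : ℕ) :
    ℙ {ω | pat step ω i = true} = ENNReal.ofReal α := by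
  have : {ω | pat step ω i = true} = {ω | step i ω = 1} := by ext ω; simp [pat]
  rw [this, hup i]

lemma meas_pat_false (hmeas : ∀ i, Measurable (step i))
    (hup : ∀ i, ℙ {ω | step i ω = 1} = ENNReal.ofReal α) (h0 : 0 ≤ α) (i : ℕ) :
    ℙ {ω | pat step ω i = false} = ENNReal.ofReal (1 - α) := by
  have h : {ω | pat step ω i = false} = {ω | pat step ω i = true}ᶜ := by
    ext ω; simp [pat]
  rw [h, measure_compl (measurableSet_pat hmeas i true) (measure_ne_top _ _),
    meas_pat_true hup i, measure_univ, ENNReal.ofReal_sub _ h0, ENNReal.ofReal_one]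


/-- master cylinder lemma -/
lemma meas_cyl (hmeas : ∀ i, Measurable (step i))
    (hindep : iIndepFun step ℙ)
    (hup : ∀ i, ℙ {ω | step i ω = 1} = ENNReal.ofReal α) (h0 : 0 ≤ α)
    (S : Finset ℕ) (b : ℕ → Bool) :
    ℙ {ω | ∀ i ∈ S, pat step ω i = b i} = ∏ i ∈ S, ENNReal.ofReal (bp α (b i)) := by
  classical
  have hset : {ω | ∀ i ∈ S, pat step ω i = b i}
      = ⋂ i ∈ S, step i ⁻¹' (if b i then ({1} : Set ℤ) else {1}ᶜ) := by
    ext ω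
    simp only [Set.mem_setOf_eq, Set.mem_iInter]
    refine forall_congr' fun i => forall_congr' fun hi => ?_
    cases hbi : b i <;> simp [pat, hbi]
  rw [hset, hindep.measure_inter_preimage_eq_mul S (fun i _ => by
    by_cases hbi : b i = true <;> simp only [hbi, if_true, if_false, Bool.false_eq_true]
    · exact measurableSet_singleton 1
    · exact (measurableSet_singleton 1).compl)]
  refine Finset.prod_congr rfl fun i _ => ?_
  cases hbi : b i
  · simp only [Bool.false_eq_true, if_false]
    have h : step i ⁻¹' ({1} : Set ℤ)ᶜ = {ω | pat step ω i = false} := by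
      ext ω; simp [pat]
    rw [h, meas_pat_false hmeas hup h0 i]; simp [bp]
  · have h : step i ⁻¹' ({1} : Set ℤ) = {ω | pat step ω i = true} := by
      ext ω; simp [pat]
    simp only [if_true]
    rw [h, meas_pat_true hup i]; simp [bp]


/-- the set where some step is not ±1 is null. -/
lemma bad_null (hmeas : ∀ i, Measurable (step i))
    (hup : ∀ i, ℙ {ω | step i ω = 1} = ENNReal.ofReal α)
    (hdown : ∀ i, ℙ {ω | step i ω = -1} = ENNReal.ofReal (1 - α))
    (h0 : 0 ≤ α) (h1 : α ≤ 1) :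
    ℙ {ω | ¬ ∀ i, step i ω = 1 ∨ step i ω = -1} = 0 := by
  have hset : {ω | ¬ ∀ i, step i ω = 1 ∨ step i ω = -1}
      = ⋃ i, ({ω | step i ω = 1} ∪ {ω | step i ω = -1})ᶜ := by
    ext ω; simp [not_forall]
  rw [hset]
  refine measure_iUnion_null fun i => ?_
  have hm1 : MeasurableSet {ω | step i ω = 1} := (hmeas i) (measurableSet_singleton 1)
  have hm2 : MeasurableSet {ω | step i ω = -1} := (hmeas i) (measurableSet_singleton (-1))
  rw [measure_compl (hm1.union hm2) (measure_ne_top _ _)]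
  have hd : Disjoint {ω | step i ω = 1} {ω | step i ω = -1} := by
    rw [Set.disjoint_iff_inter_eq_empty]
    ext ω; simp; intro h; omega
  rw [measure_union hd hm2, hup i, hdown i, ← ENNReal.ofReal_add h0 (by linarith),
    measure_univ]
  norm_num


lemma measurable_Y (hmeas : ∀ i, Measurable (step i)) (i : ℕ) :
    Measurable (fun ω => ((bval (pat step ω i) : ℤ) : ℝ)) := by
  have : (fun ω => ((bval (pat step ω i) : ℤ) : ℝ))
      = (fun b : Bool => ((bval b : ℤ) : ℝ)) ∘ (fun ω => pat step ω i) := rfl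
  rw [this]
  exact Measurable.of_discrete.comp (measurable_pat hmeas i)


/-- The law of each `±1` pattern variable. -/
lemma map_Y (hmeas : ∀ i, Measurable (step i))
    (hup : ∀ i, ℙ {ω | step i ω = 1} = ENNReal.ofReal α) (h0 : 0 ≤ α) (i : ℕ) :
    Measure.map (fun ω => ((bval (pat step ω i) : ℤ) : ℝ)) ℙ
      = ENNReal.ofReal α • Measure.dirac (1 : ℝ)
        + ENNReal.ofReal (1 - α) • Measure.dirac (-1 : ℝ) := by
  classical
  refine Measure.ext fun s hs => ?_
  rw [Measure.map_apply (measurable_Y hmeas i) hs]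
  have hpre : (fun ω => ((bval (pat step ω i) : ℤ) : ℝ)) ⁻¹' s
      = (if (1:ℝ) ∈ s then {ω | pat step ω i = true} else ∅)
        ∪ (if (-1:ℝ) ∈ s then {ω | pat step ω i = false} else ∅) := by
    ext ω
    by_cases h1 : (1:ℝ) ∈ s <;> by_cases h2 : (-1:ℝ) ∈ s <;>
      cases hb : pat step ω i <;>
      simp [h1, h2, hb, bval, Set.mem_preimage]
  rw [hpre]
  simp only [Measure.add_apply, Measure.smul_apply, Measure.dirac_apply' _ hs, smul_eq_mul]
  by_cases h1 : (1:ℝ) ∈ s <;> by_cases h2 : (-1:ℝ) ∈ s <;>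
    simp only [h1, h2, if_true, if_false, Set.union_empty, Set.empty_union,
      Set.indicator_of_mem, Set.indicator_of_notMem, Set.mem_setOf_eq,
      Pi.one_apply, mul_one, mul_zero, measure_empty, add_zero, zero_add]
  · have hd : Disjoint {ω | pat step ω i = true} {ω | pat step ω i = false} := by
      rw [Set.disjoint_iff_inter_eq_empty]; ext ω; simp
    rw [measure_union hd (measurableSet_pat hmeas i false),
      meas_pat_true hup i, meas_pat_false hmeas hup h0 i]
  · rw [Set.indicator_of_notMem h2, meas_pat_true hup i]; ring
  · rw [Set.indicator_of_notMem h1, meas_pat_false hmeas hup h0 i]; ring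
  · rw [Set.indicator_of_notMem h1, Set.indicator_of_notMem h2]; ring


/-- strong law conclusion: the shifted walk visits every negative level a.s. -/
lemma down_ever (hmeas : ∀ i, Measurable (step i))
    (hindep : iIndepFun step ℙ)
    (hup : ∀ i, ℙ {ω | step i ω = 1} = ENNReal.ofReal α)
    (hα0 : 0 < α) (hα : α < 1/2) (n : ℕ) (w : ℤ) :
    ℙ {ω | ∃ j, psum (fun i => pat step ω (n + i)) j ≤ -w} = 1 := by
  classical
  set Y : ℕ → Ω → ℝ := fun i ω => ((bval (pat step ω (n + i)) : ℤ) : ℝ) with hY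
  have hYmeas : ∀ i, Measurable (Y i) := fun i => measurable_Y hmeas (n + i)
  have hYbd : ∀ i ω, ‖Y i ω‖ ≤ 1 := by
    intro i ω; cases h : pat step ω (n + i) <;> simp [hY, h, bval]
  have hint : Integrable (Y 0) ℙ := by
    refine ⟨(hYmeas 0).aestronglyMeasurable, ?_⟩
    exact HasFiniteIntegral.of_bounded (C := 1) (Eventually.of_forall (hYbd 0))
  have hYindep : Pairwise (Function.onFun (IndepFun · · ℙ) Y) := by
    intro i j hij
    have h := hindep.indepFun (show n + i ≠ n + j by omega)
    exact h.comp (φ := fun z : ℤ => ((bval (decide (z = 1)) : ℤ) : ℝ))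
      (ψ := fun z : ℤ => ((bval (decide (z = 1)) : ℤ) : ℝ))
      Measurable.of_discrete Measurable.of_discrete
  have hident : ∀ i, IdentDistrib (Y i) (Y 0) ℙ ℙ := by
    intro i
    exact ⟨(hYmeas i).aemeasurable, (hYmeas 0).aemeasurable, by
      rw [hY]
      simp only
      rw [map_Y hmeas hup hα0.le (n + i), map_Y hmeas hup hα0.le (n + 0)]⟩
  have hslln := strong_law_ae Y hint hYindep hident
  -- compute the mean
  have hmean : (ℙ[Y 0]) = 2 * α - 1 := by
    have hA : MeasurableSet {ω | pat step ω (n + 0) = true} :=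
      measurableSet_pat hmeas (n + 0) true
    have hrepr : Y 0 = fun ω =>
        Set.indicator {ω | pat step ω (n + 0) = true} (fun _ => (2:ℝ)) ω - 1 := by
      funext ω
      by_cases h : pat step ω (n + 0) = true
      · have hm : ω ∈ {ω | pat step ω (n + 0) = true} := h
        rw [Set.indicator_of_mem hm]
        have h2 : pat step ω n = true := by simpa using h
        simp [hY, bval, h2]
        norm_num
      · have hm : ω ∉ {ω | pat step ω (n + 0) = true} := h
        rw [Set.indicator_of_notMem hm]
        have h2 : pat step ω n = false := by simpa using h
        simp [hY, bval, h2]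
    have hind : Integrable (fun ω =>
        Set.indicator {ω | pat step ω (n + 0) = true} (fun _ => (2:ℝ)) ω) ℙ :=
      (integrable_const (2:ℝ)).indicator hA
    rw [hrepr, integral_sub hind (integrable_const 1), integral_indicator_const _ hA,
      integral_const, measureReal_def, measureReal_def, measure_univ, meas_pat_true hup (n + 0),
      ENNReal.toReal_ofReal hα0.le]
    simp; ring
  rw [hmean] at hslln
  -- a.e. the partial sums tend to -∞
  have hae : ∀ᵐ ω ∂(ℙ : Measure Ω),
      ω ∈ {ω | ∃ j, psum (fun i => pat step ω (n + i)) j ≤ -w} := by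
    filter_upwards [hslln] with ω hω
    have hc : (2 * α - 1) < (2 * α - 1) / 2 := by linarith
    have hev := hω.eventually_lt_const hc
    obtain ⟨N, hN⟩ := eventually_atTop.1 hev
    obtain ⟨M, hM⟩ := exists_nat_ge ((2 * |(w:ℝ)| + 2) / (1 - 2*α))
    set j := max (max N M) 1 with hj
    have hjN : N ≤ j := le_trans (le_max_left _ _) (le_max_left _ _)
    have hjM : (M:ℝ) ≤ j := by
      have : M ≤ j := le_trans (le_max_right _ _) (le_max_left _ _)
      exact_mod_cast this
    have hj1 : (1:ℝ) ≤ (j:ℝ) := by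
      have : 1 ≤ j := le_max_right _ _
      exact_mod_cast this
    have hjpos : (0:ℝ) < j := by linarith
    have hsum := hN j hjN
    rw [smul_eq_mul] at hsum
    have hsum2 : ∑ i ∈ range j, Y i ω < (j:ℝ) * ((2*α-1)/2) := by
      have := (mul_lt_mul_iff_right₀ hjpos).2 hsum
      rw [← mul_assoc, mul_inv_cancel₀ (ne_of_gt hjpos), one_mul] at this
      exact this
    have hkey : (j:ℝ) * ((2*α-1)/2) ≤ -(w:ℝ) := by
      have h2α : 0 < 1 - 2*α := by linarith
      have : (2 * |(w:ℝ)| + 2) ≤ (j:ℝ) * (1 - 2*α) := by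
        rw [div_le_iff₀ h2α] at hM
        calc (2 * |(w:ℝ)| + 2) ≤ (M:ℝ) * (1 - 2*α) := hM
        _ ≤ (j:ℝ) * (1 - 2*α) := by nlinarith
      have habs : (w:ℝ) ≤ |(w:ℝ)| := le_abs_self _
      nlinarith
    refine ⟨j, ?_⟩
    have hcast : ((psum (fun i => pat step ω (n + i)) j : ℤ) : ℝ)
        = ∑ i ∈ range j, Y i ω := by
      rw [psum]
      push_cast
      rfl
    have : ((psum (fun i => pat step ω (n + i)) j : ℤ) : ℝ) ≤ -(w:ℝ) := by
      rw [hcast]; linarith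
    exact_mod_cast this
  rw [← measure_univ (μ := (ℙ : Measure Ω))]
  exact measure_congr (Filter.eventuallyEq_univ.2 hae)


/-- offset cylinder. -/
lemma meas_cyl_offset (hmeas : ∀ i, Measurable (step i))
    (hindep : iIndepFun step ℙ)
    (hup : ∀ i, ℙ {ω | step i ω = 1} = ENNReal.ofReal α) (h0 : 0 ≤ α)
    (a k : ℕ) (c : ℕ → Bool) :
    ℙ {ω | ∀ i < k, pat step ω (a + i) = c i}
      = ∏ i ∈ Finset.range k, ENNReal.ofReal (bp α (c i)) := by
  classical
  have hset : {ω | ∀ i < k, pat step ω (a + i) = c i}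
      = {ω | ∀ m ∈ (Finset.range k).image (fun i => a + i),
          pat step ω m = (fun m => c (m - a)) m} := by
    ext ω
    simp only [Set.mem_setOf_eq, Finset.mem_image, Finset.mem_range]
    constructor
    · rintro h m ⟨i, hi, rfl⟩
      rw [Nat.add_sub_cancel_left]
      exact h i hi
    · intro h i hi
      have := h (a + i) ⟨i, hi, rfl⟩
      rwa [Nat.add_sub_cancel_left] at this
  rw [hset, meas_cyl hmeas hindep hup h0]
  rw [Finset.prod_image (by intro x _ y _ h; simp only at h; omega)]
  exact Finset.prod_congr rfl fun i _ => by rw [Nat.add_sub_cancel_left]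

lemma measurableSet_cyl_offset (hmeas : ∀ i, Measurable (step i)) (a k : ℕ) (c : ℕ → Bool) :
    MeasurableSet {ω | ∀ i < k, pat step ω (a + i) = c i} := by
  have : {ω | ∀ i < k, pat step ω (a + i) = c i}
      = ⋂ i ∈ Finset.range k, {ω | pat step ω (a + i) = c i} := by
    ext ω; simp [Set.mem_iInter]
  rw [this]
  exact Finset.measurableSet_biInter _ fun i _ => measurableSet_pat hmeas (a + i) (c i)

/-- generic pattern event partition. -/
lemma meas_pattern_event (hmeas : ∀ i, Measurable (step i))
    (hindep : iIndepFun step ℙ)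
    (hup : ∀ i, ℙ {ω | step i ω = 1} = ENNReal.ofReal α) (h0 : 0 ≤ α)
    (a k : ℕ) (Q : (ℕ → Bool) → Prop) [DecidablePred Q]
    (hQ : ∀ δ δ' : ℕ → Bool, (∀ l < k, δ l = δ' l) → Q δ → Q δ') :
    ℙ {ω | Q (fun i => pat step ω (a + i))}
      = ∑ δ ∈ Finset.univ.filter (fun δ : Fin k → Bool => Q (ext k δ)),
          ∏ l ∈ Finset.range k, ENNReal.ofReal (bp α (ext k δ l)) := by
  classical
  have hset : {ω | Q (fun i => pat step ω (a + i))}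
      = ⋃ δ ∈ Finset.univ.filter (fun δ : Fin k → Bool => Q (ext k δ)),
          {ω | ∀ i < k, pat step ω (a + i) = ext k δ i} := by
    ext ω
    simp only [Set.mem_setOf_eq, Set.mem_iUnion, Finset.mem_filter, Finset.mem_univ, true_and]
    constructor
    · intro h
      refine ⟨fun i => pat step ω (a + i.1), ?_, ?_⟩
      · exact hQ _ _ (fun l hl => by simp [ext, dif_pos hl]) h
      · intro i hi; simp [ext, dif_pos hi]
    · rintro ⟨δ, hδQ, hδ⟩
      exact hQ _ _ (fun l hl => (hδ l hl).symm) hδQ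
  rw [hset, measure_biUnion_finset ?disj (fun δ _ => measurableSet_cyl_offset hmeas a k _)]
  · exact Finset.sum_congr rfl fun δ _ => meas_cyl_offset hmeas hindep hup h0 a k _
  case disj =>
    intro δ hδ δ' hδ' hne
    simp only [Function.onFun]
    rw [Set.disjoint_iff_inter_eq_empty]
    ext ω
    simp only [Set.mem_inter_iff, Set.mem_setOf_eq, Set.mem_empty_iff_false, iff_false]
    rintro ⟨h1, h2⟩
    apply hne
    funext i
    have e1 := h1 i.1 i.2
    have e2 := h2 i.1 i.2
    simp only [ext, dif_pos i.2] at e1 e2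
    rw [← e1, ← e2]



lemma measurable_psum (hmeas : ∀ i, Measurable (step i)) (a j : ℕ) :
    Measurable (fun ω => psum (fun i => pat step ω (a + i)) j) := by
  unfold psum
  apply Finset.measurable_sum
  intro l _
  have : (fun ω => bval (pat step ω (a + l)))
      = (fun z : ℤ => bval (decide (z = 1))) ∘ step (a + l) := rfl
  rw [this]
  exact Measurable.of_discrete.comp (hmeas (a + l))


lemma bp_nonneg {α : ℝ} (h0 : 0 ≤ α) (h1 : α ≤ 1) (b : Bool) : 0 ≤ bp α b := by
  cases b <;> simp [bp] <;> linarith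

/-- front cylinder times tail cylinder factorizes. -/
lemma meas_front_tailcyl (hmeas : ∀ i, Measurable (step i))
    (hindep : iIndepFun step ℙ)
    (hup : ∀ i, ℙ {ω | step i ω = 1} = ENNReal.ofReal α) (h0 : 0 ≤ α)
    (n k : ℕ) (ε : Fin n → Bool) (c : ℕ → Bool) :
    ℙ ({ω | ∀ i < n, pat step ω i = ext n ε i} ∩ {ω | ∀ i < k, pat step ω (n + i) = c i})
      = ℙ {ω | ∀ i < n, pat step ω i = ext n ε i}
        * ℙ {ω | ∀ i < k, pat step ω (n + i) = c i} := by
  classical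
  set b : ℕ → Bool := fun m => if m < n then ext n ε m else c (m - n) with hb
  have hset : {ω | ∀ i < n, pat step ω i = ext n ε i}
      ∩ {ω | ∀ i < k, pat step ω (n + i) = c i}
      = {ω | ∀ i ∈ Finset.range (n + k), pat step ω i = b i} := by
    ext ω
    simp only [Set.mem_inter_iff, Set.mem_setOf_eq, Finset.mem_range]
    constructor
    · rintro ⟨h1, h2⟩ i hi
      by_cases h : i < n
      · simp only [hb, if_pos h]; exact h1 i h
      · simp only [hb, if_neg h]
        have := h2 (i - n) (by omega)
        rwa [show n + (i - n) = i by omega] at this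
    · intro h
      constructor
      · intro i hi
        have := h i (by omega)
        simp only [hb, if_pos hi] at this
        exact this
      · intro i hi
        have := h (n + i) (by omega)
        simp only [hb, if_neg (show ¬ n + i < n by omega), Nat.add_sub_cancel_left] at this
        exact this
  have hfront : {ω | ∀ i < n, pat step ω i = ext n ε i}
      = {ω | ∀ i ∈ Finset.range n, pat step ω i = ext n ε i} := by
    ext ω; simp [Finset.mem_range]
  rw [hset, hfront, meas_cyl hmeas hindep hup h0, meas_cyl hmeas hindep hup h0,
    meas_cyl_offset hmeas hindep hup h0, Finset.prod_range_add]
  congr 1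
  · exact Finset.prod_congr rfl fun i hi => by
      simp only [hb, if_pos (Finset.mem_range.1 hi)]
  · exact Finset.prod_congr rfl fun i _ => by
      simp only [hb, if_neg (show ¬ n + i < n by omega), Nat.add_sub_cancel_left]

/-- front cylinder is independent of any tail pattern event. -/
lemma meas_front_tail_event (hmeas : ∀ i, Measurable (step i))
    (hindep : iIndepFun step ℙ)
    (hup : ∀ i, ℙ {ω | step i ω = 1} = ENNReal.ofReal α) (h0 : 0 ≤ α)
    (n k : ℕ) (ε : Fin n → Bool) (Q : (ℕ → Bool) → Prop) [DecidablePred Q]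
    (hQ : ∀ δ δ' : ℕ → Bool, (∀ l < k, δ l = δ' l) → Q δ → Q δ') :
    ℙ ({ω | ∀ i < n, pat step ω i = ext n ε i} ∩ {ω | Q (fun i => pat step ω (n + i))})
      = ℙ {ω | ∀ i < n, pat step ω i = ext n ε i}
        * ℙ {ω | Q (fun i => pat step ω (n + i))} := by
  classical
  have hset : {ω | Q (fun i => pat step ω (n + i))}
      = ⋃ δ ∈ Finset.univ.filter (fun δ : Fin k → Bool => Q (ext k δ)),
          {ω | ∀ i < k, pat step ω (n + i) = ext k δ i} := by
    ext ω
    simp only [Set.mem_setOf_eq, Set.mem_iUnion, Finset.mem_filter, Finset.mem_univ, true_and]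
    constructor
    · intro h
      refine ⟨fun i => pat step ω (n + i.1), ?_, ?_⟩
      · exact hQ _ _ (fun l hl => by simp [ext, dif_pos hl]) h
      · intro i hi; simp [ext, dif_pos hi]
    · rintro ⟨δ, hδQ, hδ⟩
      exact hQ _ _ (fun l hl => (hδ l hl).symm) hδQ
  have hdisjcyl : ∀ δ ∈ Finset.univ.filter (fun δ : Fin k → Bool => Q (ext k δ)),
      ∀ δ' ∈ Finset.univ.filter (fun δ : Fin k → Bool => Q (ext k δ)), δ ≠ δ' →
      Disjoint {ω : Ω | ∀ i < k, pat step ω (n + i) = ext k δ i}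
        {ω : Ω | ∀ i < k, pat step ω (n + i) = ext k δ' i} := by
    intro δ _ δ' _ hne
    rw [Set.disjoint_iff_inter_eq_empty]
    ext ω
    simp only [Set.mem_inter_iff, Set.mem_setOf_eq, Set.mem_empty_iff_false, iff_false]
    rintro ⟨h1, h2⟩
    apply hne
    funext i
    have e1 := h1 i.1 i.2
    have e2 := h2 i.1 i.2
    simp only [ext, dif_pos i.2] at e1 e2
    rw [← e1, ← e2]
  have hcylm : ∀ δ : Fin k → Bool,
      MeasurableSet {ω : Ω | ∀ i < k, pat step ω (n + i) = ext k δ i} := fun δ =>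
    measurableSet_cyl_offset hmeas n k _
  have hfrontm : MeasurableSet {ω : Ω | ∀ i < n, pat step ω i = ext n ε i} := by
    have : {ω : Ω | ∀ i < n, pat step ω i = ext n ε i}
        = {ω : Ω | ∀ i < n, pat step ω (0 + i) = ext n ε i} := by
      ext ω; simp
    rw [this]
    exact measurableSet_cyl_offset hmeas 0 n _
  rw [hset, Set.inter_iUnion₂]
  rw [measure_biUnion_finset
      (fun δ hδ δ' hδ' hne => ((hdisjcyl δ hδ δ' hδ' hne).mono
        Set.inter_subset_right Set.inter_subset_right))
      (fun δ _ => hfrontm.inter (hcylm δ))]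
  rw [measure_biUnion_finset hdisjcyl (fun δ _ => hcylm δ), Finset.mul_sum]
  exact Finset.sum_congr rfl fun δ _ => meas_front_tailcyl hmeas hindep hup h0 n k ε _

lemma meas_front_hit (hmeas : ∀ i, Measurable (step i))
    (hindep : iIndepFun step ℙ)
    (hup : ∀ i, ℙ {ω | step i ω = 1} = ENNReal.ofReal α) (h0 : 0 ≤ α)
    (n : ℕ) (ε : Fin n → Bool) (v : ℤ) :
    ℙ ({ω | ∀ i < n, pat step ω i = ext n ε i}
        ∩ {ω | ∃ j, v ≤ psum (fun i => pat step ω (n + i)) j})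
      = ℙ {ω | ∀ i < n, pat step ω i = ext n ε i}
        * ℙ {ω | ∃ j, v ≤ psum (fun i => pat step ω (n + i)) j} := by
  classical
  set Front := {ω : Ω | ∀ i < n, pat step ω i = ext n ε i} with hFront
  set HitBy : ℕ → Set Ω := fun j => {ω | ∃ j' ≤ j, v ≤ psum (fun i => pat step ω (n + i)) j'}
    with hHitBy
  have hmono : Monotone HitBy := by
    intro j j' hj ω
    simp only [hHitBy, Set.mem_setOf_eq]
    rintro ⟨j'', hj'', hle⟩
    exact ⟨j'', le_trans hj'' hj, hle⟩
  have hUn : {ω : Ω | ∃ j, v ≤ psum (fun i => pat step ω (n + i)) j} = ⋃ j, HitBy j := by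
    ext ω
    simp only [Set.mem_setOf_eq, Set.mem_iUnion, hHitBy]
    constructor
    · rintro ⟨j, hj⟩; exact ⟨j, j, le_refl j, hj⟩
    · rintro ⟨j, j', _, hj'⟩; exact ⟨j', hj'⟩
  have hfact : ∀ j, ℙ (Front ∩ HitBy j) = ℙ Front * ℙ (HitBy j) := by
    intro j
    exact meas_front_tail_event hmeas hindep hup h0 n j ε
      (fun δ => ∃ j' ≤ j, v ≤ psum δ j')
      (by
        rintro δ δ' hδ ⟨j', hj', hle⟩
        exact ⟨j', hj', by rwa [psum_congr hδ hj'] at hle⟩)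
  have h1 : Filter.Tendsto (fun j => ℙ (Front ∩ HitBy j)) atTop
      (nhds (ℙ (Front ∩ ⋃ j, HitBy j))) := by
    rw [Set.inter_iUnion]
    exact tendsto_measure_iUnion_atTop (fun j j' hj => Set.inter_subset_inter_right _ (hmono hj))
  have h2 : Filter.Tendsto (fun j => ℙ Front * ℙ (HitBy j)) atTop
      (nhds (ℙ Front * ℙ (⋃ j, HitBy j))) :=
    ENNReal.Tendsto.const_mul (tendsto_measure_iUnion_atTop hmono)
      (Or.inr (measure_ne_top _ _))
  rw [hUn]
  exact tendsto_nhds_unique (by simpa only [hfact] using h1) h2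

/-- the hitting probability. -/
lemma meas_hit (hmeas : ∀ i, Measurable (step i))
    (hindep : iIndepFun step ℙ)
    (hup : ∀ i, ℙ {ω | step i ω = 1} = ENNReal.ofReal α)
    (hα0 : 0 < α) (hα : α < 1/2) (n w : ℕ) (hw : 1 ≤ w) :
    ℙ {ω | ∃ j, (w:ℤ) ≤ psum (fun i => pat step ω (n + i)) j}
      = ENNReal.ofReal ((α/(1-α))^w) := by
  classical
  have hα1 : α < 1 := by linarith
  set v : ℤ := (w : ℤ) with hv
  have hv1 : 1 ≤ v := by rw [hv]; exact_mod_cast hw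
  set c : ENNReal := ENNReal.ofReal ((α/(1-α))^w) with hc
  set tp : Ω → ℕ → Bool := fun ω i => pat step ω (n + i) with htp
  set Fst : ℕ → Set Ω := fun i =>
    {ω | v ≤ psum (tp ω) i ∧ ∀ l < i, psum (tp ω) l < v} with hFst
  set Fst' : ℕ → Set Ω := fun i =>
    {ω | psum (tp ω) i ≤ -v ∧ ∀ l < i, -v < psum (tp ω) l} with hFst'
  have hpm : ∀ j, Measurable (fun ω => psum (tp ω) j) := fun j =>
    measurable_psum hmeas n j
  have hFm : ∀ i, MeasurableSet (Fst i) := by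
    intro i
    have : Fst i = (fun ω => psum (tp ω) i) ⁻¹' (Set.Ici v)
        ∩ ⋂ l ∈ Finset.range i, (fun ω => psum (tp ω) l) ⁻¹' (Set.Iio v) := by
      ext ω; simp [hFst, Set.mem_iInter, Set.mem_preimage]
    rw [this]
    exact ((hpm i) measurableSet_Ici).inter
      (Finset.measurableSet_biInter _ fun l _ => (hpm l) measurableSet_Iio)
  have hFm' : ∀ i, MeasurableSet (Fst' i) := by
    intro i
    have : Fst' i = (fun ω => psum (tp ω) i) ⁻¹' (Set.Iic (-v))
        ∩ ⋂ l ∈ Finset.range i, (fun ω => psum (tp ω) l) ⁻¹' (Set.Ioi (-v)) := by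
      ext ω; simp [hFst', Set.mem_iInter, Set.mem_preimage]
    rw [this]
    exact ((hpm i) measurableSet_Iic).inter
      (Finset.measurableSet_biInter _ fun l _ => (hpm l) measurableSet_Ioi)
  have hdisj : Pairwise (Function.onFun Disjoint Fst) := by
    intro i i' hne
    rw [Function.onFun, Set.disjoint_iff_inter_eq_empty]
    ext ω
    simp only [Set.mem_inter_iff, hFst, Set.mem_setOf_eq, Set.mem_empty_iff_false, iff_false]
    rintro ⟨⟨h1, h2⟩, ⟨h3, h4⟩⟩
    rcases lt_or_gt_of_ne hne with h | h
    · exact absurd h1 (not_le.2 (h4 i h))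
    · exact absurd h3 (not_le.2 (h2 i' h))
  have hdisj' : Pairwise (Function.onFun Disjoint Fst') := by
    intro i i' hne
    rw [Function.onFun, Set.disjoint_iff_inter_eq_empty]
    ext ω
    simp only [Set.mem_inter_iff, hFst', Set.mem_setOf_eq, Set.mem_empty_iff_false, iff_false]
    rintro ⟨⟨h1, h2⟩, ⟨h3, h4⟩⟩
    rcases lt_or_gt_of_ne hne with h | h
    · exact absurd (h4 i h) (not_lt.2 h1)
    · exact absurd (h2 i' h) (not_lt.2 h3)
  have hUn : {ω | ∃ j, v ≤ psum (tp ω) j} = ⋃ i, Fst i := by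
    ext ω
    simp only [Set.mem_setOf_eq, Set.mem_iUnion, hFst]
    constructor
    · intro h
      have hex : ∃ j, v ≤ psum (tp ω) j := h
      refine ⟨Nat.find hex, Nat.find_spec hex, fun l hl => ?_⟩
      exact not_le.1 (Nat.find_min hex hl)
    · rintro ⟨i, hi, _⟩; exact ⟨i, hi⟩
  have hUn' : {ω | ∃ j, psum (tp ω) j ≤ -v} = ⋃ i, Fst' i := by
    ext ω
    simp only [Set.mem_setOf_eq, Set.mem_iUnion, hFst']
    constructor
    · intro h
      have hex : ∃ j, psum (tp ω) j ≤ -v := h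
      refine ⟨Nat.find hex, Nat.find_spec hex, fun l hl => ?_⟩
      exact not_le.1 (Nat.find_min hex hl)
    · rintro ⟨i, hi, _⟩; exact ⟨i, hi⟩
  -- the flipped walk hits -v with probability one
  have hone : ∑' i, ℙ (Fst' i) = 1 := by
    rw [← measure_iUnion hdisj' hFm', ← hUn']
    exact down_ever hmeas hindep hup hα0 hα n v
  -- each first-passage event and its flip
  have hkey : ∀ i, ℙ (Fst i) = c * ℙ (Fst' i) := by
    intro i
    have hQ : ∀ δ δ' : ℕ → Bool, (∀ l < i, δ l = δ' l) →
        (v ≤ psum δ i ∧ ∀ l < i, psum δ l < v) →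
        (v ≤ psum δ' i ∧ ∀ l < i, psum δ' l < v) := by
      rintro δ δ' hδ ⟨h1, h2⟩
      exact ⟨by rwa [← psum_congr hδ (le_refl i)],
        fun l hl => by rw [← psum_congr hδ (le_of_lt hl)]; exact h2 l hl⟩
    have hQ' : ∀ δ δ' : ℕ → Bool, (∀ l < i, δ l = δ' l) →
        (psum δ i ≤ -v ∧ ∀ l < i, -v < psum δ l) →
        (psum δ' i ≤ -v ∧ ∀ l < i, -v < psum δ' l) := by
      rintro δ δ' hδ ⟨h1, h2⟩
      exact ⟨by rwa [← psum_congr hδ (le_refl i)],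
        fun l hl => by rw [← psum_congr hδ (le_of_lt hl)]; exact h2 l hl⟩
    have e1 : ℙ (Fst i) = ∑ δ ∈ Finset.univ.filter
        (fun δ : Fin i → Bool => v ≤ psum (ext i δ) i ∧ ∀ l < i, psum (ext i δ) l < v),
        ∏ l ∈ Finset.range i, ENNReal.ofReal (bp α (ext i δ l)) :=
      meas_pattern_event hmeas hindep hup hα0.le n i
        (fun δ => v ≤ psum δ i ∧ ∀ l < i, psum δ l < v) hQ
    have e2 : ℙ (Fst' i) = ∑ δ ∈ Finset.univ.filter
        (fun δ : Fin i → Bool => psum (ext i δ) i ≤ -v ∧ ∀ l < i, -v < psum (ext i δ) l),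
        ∏ l ∈ Finset.range i, ENNReal.ofReal (bp α (ext i δ l)) :=
      meas_pattern_event hmeas hindep hup hα0.le n i
        (fun δ => psum δ i ≤ -v ∧ ∀ l < i, -v < psum δ l) hQ'
    rw [e1, e2, Finset.mul_sum]
    -- flip as map on Fin i → Bool
    have hextflip : ∀ (δ : Fin i → Bool) (l : ℕ), l < i →
        ext i (fun t => !(δ t)) l = !(ext i δ l) := by
      intro δ l hl; simp [ext, dif_pos hl]
    have hpsumflip : ∀ (δ : Fin i → Bool) (j : ℕ), j ≤ i →
        psum (ext i (fun t => !(δ t))) j = - psum (ext i δ) j := by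
      intro δ j hj
      rw [psum_congr (δ' := fun l => !(ext i δ l)) (fun l hl => hextflip δ l hl) hj,
        psum_flip]
    refine Finset.sum_nbij' (i := fun δ => fun t => !(δ t)) (j := fun δ => fun t => !(δ t))
      ?_ ?_ ?_ ?_ ?_
    · intro δ hδ
      simp only [Finset.mem_filter, Finset.mem_univ, true_and] at hδ ⊢
      obtain ⟨h1, h2⟩ := hδ
      refine ⟨?_, fun l hl => ?_⟩
      · rw [hpsumflip δ i (le_refl i)]
        have := psum_first_eq hv1 h1 h2
        omega
      · rw [hpsumflip δ l (le_of_lt hl)]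
        have := h2 l hl
        omega
    · intro δ hδ
      simp only [Finset.mem_filter, Finset.mem_univ, true_and] at hδ ⊢
      obtain ⟨h1, h2⟩ := hδ
      refine ⟨?_, fun l hl => ?_⟩
      · rw [show δ = fun t => !(!(δ t)) by funext t; simp] at h1
        rw [hpsumflip (fun t => !(δ t)) i (le_refl i)] at h1
        omega
      · rw [show δ = fun t => !(!(δ t)) by funext t; simp] at h2
        have := h2 l hl
        rw [hpsumflip (fun t => !(δ t)) l (le_of_lt hl)] at this
        omega
    · intro δ _; funext t; simp
    · intro δ _; funext t; simp
    · intro δ hδ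
      simp only [Finset.mem_filter, Finset.mem_univ, true_and] at hδ
      obtain ⟨h1, h2⟩ := hδ
      have hval : psum (ext i δ) i = (w : ℤ) := psum_first_eq hv1 h1 h2
      have hnn : ∀ l ∈ Finset.range i, 0 ≤ bp α (ext i δ l) :=
        fun l _ => bp_nonneg hα0.le hα1.le _
      have hnn' : ∀ l ∈ Finset.range i, 0 ≤ bp α (!(ext i δ l)) :=
        fun l _ => bp_nonneg hα0.le hα1.le _
      rw [← ENNReal.ofReal_prod_of_nonneg hnn]
      have : ∏ l ∈ Finset.range i, ENNReal.ofReal (bp α (ext i (fun t => !(δ t)) l))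
          = ∏ l ∈ Finset.range i, ENNReal.ofReal (bp α (!(ext i δ l))) :=
        Finset.prod_congr rfl fun l hl => by
          rw [hextflip δ l (Finset.mem_range.1 hl)]
      rw [this, ← ENNReal.ofReal_prod_of_nonneg hnn', hc, ← ENNReal.ofReal_mul (by
        have h1α : (0:ℝ) < 1 - α := by linarith
        positivity)]
      congr 1
      exact prod_bp_flip hα0 hα1 (ext i δ) i w hval
  rw [hUn, measure_iUnion hdisj hFm]
  calc ∑' i, ℙ (Fst i) = ∑' i, c * ℙ (Fst' i) := by
        exact tsum_congr hkey
  _ = c * ∑' i, ℙ (Fst' i) := ENNReal.tsum_mul_left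
  _ = c := by rw [hone, mul_one]



end
end SSLE

open SSLE in
theorem ssle_private_game_win_probability
    {Ω : Type*} [MeasureSpace Ω] [IsProbabilityMeasure (ℙ : Measure Ω)]
    (α : ℝ) (hα0 : 0 < α) (hα : α < 1/2)
    (step : ℕ → Ω → ℤ)
    (hmeas : ∀ i, Measurable (step i))
    (hindep : iIndepFun step ℙ)
    (hup : ∀ i, ℙ {ω | step i ω = 1} = ENNReal.ofReal α)
    (hdown : ∀ i, ℙ {ω | step i ω = -1} = ENNReal.ofReal (1 - α))
    (G : ℕ → Ω → ℤ) (hG0 : ∀ ω, G 0 ω = 0)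
    (hG : ∀ m ω, G (m+1) ω = G m ω + step m ω)
    (n : ℕ) :
    ℙ {ω | ∃ m, n ≤ m ∧ 0 ≤ G m ω} =
      ENNReal.ofReal (
        (∑ v ∈ Finset.range (n + 1),
          if Even (n + v) then
            (n.choose ((n + v) / 2)) * α ^ ((n + v) / 2)
              * (1 - α) ^ (n - (n + v) / 2)
          else 0) +
        (∑ v ∈ Finset.Icc 1 n,
          if Even (n - v) then
            (n.choose ((n - v) / 2)) * (1 - α) ^ ((n - v) / 2)
              * α ^ (n - (n - v) / 2)
          else 0)) := by
  classical
  have h0 : 0 ≤ α := hα0.le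
  have hα1 : α ≤ 1 := by linarith
  have hGsum : ∀ m, ∀ ω, G m ω = ∑ i ∈ Finset.range m, step i ω := by
    intro m
    induction m with
    | zero => intro ω; simp [hG0]
    | succ m ih => intro ω; rw [hG m ω, ih ω, Finset.sum_range_succ]
  set good : Set Ω := {ω | ∀ i, step i ω = 1 ∨ step i ω = -1} with hgood
  have hbad : ℙ goodᶜ = 0 := by
    have h : goodᶜ = {ω | ¬ ∀ i, step i ω = 1 ∨ step i ω = -1} := rfl
    rw [h]
    exact bad_null hmeas hup hdown h0 hα1
  have hstepchar : ∀ ω, ω ∈ good → ∀ i, step i ω = bval (pat step ω i) := by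
    intro ω hg i
    rcases hg i with h | h <;> simp [pat, bval, h]
  have hGpat : ∀ ω, ω ∈ good → ∀ m, G m ω = psum (fun i => pat step ω i) m := by
    intro ω hg m
    rw [hGsum m ω]
    exact Finset.sum_congr rfl fun i _ => hstepchar ω hg i
  set E' : Set Ω := {ω | ∃ j, 0 ≤ psum (fun i => pat step ω i) n
      + psum (fun i => pat step ω (n + i)) j} with hE'
  have hEE' : {ω | ∃ m, n ≤ m ∧ 0 ≤ G m ω} ∩ good = E' ∩ good := by
    ext ω
    simp only [Set.mem_inter_iff, Set.mem_setOf_eq, hE']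
    constructor
    · rintro ⟨⟨m, hmn, hGm⟩, hg⟩
      obtain ⟨j, rfl⟩ : ∃ j, m = n + j := ⟨m - n, by omega⟩
      refine ⟨⟨j, ?_⟩, hg⟩
      have h1 : G (n + j) ω = psum (fun i => pat step ω i) (n + j) := hGpat ω hg (n + j)
      rw [psum_split] at h1
      omega
    · rintro ⟨⟨j, hj⟩, hg⟩
      refine ⟨⟨n + j, by omega, ?_⟩, hg⟩
      rw [hGpat ω hg (n + j), psum_split]
      omega
  have hPE : ℙ {ω | ∃ m, n ≤ m ∧ 0 ≤ G m ω} = ℙ E' := by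
    rw [← measure_inter_conull (s := {ω | ∃ m, n ≤ m ∧ 0 ≤ G m ω}) hbad, hEE',
      measure_inter_conull hbad]
  -- decompose over front patterns
  have hE'dec : E' = ⋃ ε ∈ (Finset.univ : Finset (Fin n → Bool)),
      ({ω : Ω | ∀ i < n, pat step ω i = ext n ε i}
        ∩ {ω : Ω | ∃ j, -psum (ext n ε) n ≤ psum (fun i => pat step ω (n + i)) j}) := by
    ext ω
    simp only [hE', Set.mem_setOf_eq, Set.mem_iUnion, Finset.mem_univ, true_and,
      Set.mem_inter_iff, exists_prop]
    constructor
    · rintro ⟨j, hj⟩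
      refine ⟨fun i : Fin n => pat step ω i.1, ?_, j, ?_⟩
      · intro i hi; simp [SSLE.ext, dif_pos hi]
      · have he : psum (ext n (fun i : Fin n => pat step ω i.1)) n
            = psum (fun i => pat step ω i) n :=
          psum_congr (fun l hl => by simp [SSLE.ext, dif_pos hl]) le_rfl
        rw [he]
        omega
    · rintro ⟨ε, hfr, j, hj⟩
      refine ⟨j, ?_⟩
      have he : psum (fun i => pat step ω i) n = psum (ext n ε) n :=
        psum_congr (fun l hl => hfr l hl) le_rfl
      rw [he]
      omega
  have hFrontm : ∀ ε : Fin n → Bool,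
      MeasurableSet {ω : Ω | ∀ i < n, pat step ω i = ext n ε i} := by
    intro ε
    have h : {ω : Ω | ∀ i < n, pat step ω i = ext n ε i}
        = {ω : Ω | ∀ i < n, pat step ω (0 + i) = ext n ε i} := by
      ext ω; simp
    rw [h]
    exact measurableSet_cyl_offset hmeas 0 n _
  have hHitm : ∀ ε : Fin n → Bool,
      MeasurableSet {ω : Ω | ∃ j, -psum (ext n ε) n
        ≤ psum (fun i => pat step ω (n + i)) j} := by
    intro ε
    have h : {ω : Ω | ∃ j, -psum (ext n ε) n ≤ psum (fun i => pat step ω (n + i)) j}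
        = ⋃ j, (fun ω => psum (fun i => pat step ω (n + i)) j) ⁻¹'
            (Set.Ici (-psum (ext n ε) n)) := by
      ext ω; simp [Set.mem_iUnion, Set.mem_preimage]
    rw [h]
    exact MeasurableSet.iUnion fun j => (measurable_psum hmeas n j) measurableSet_Ici
  have hsum : ℙ E' = ∑ ε ∈ (Finset.univ : Finset (Fin n → Bool)),
      ℙ ({ω : Ω | ∀ i < n, pat step ω i = ext n ε i}
        ∩ {ω : Ω | ∃ j, -psum (ext n ε) n ≤ psum (fun i => pat step ω (n + i)) j}) := by
    rw [hE'dec]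
    refine measure_biUnion_finset ?_ (fun ε _ => (hFrontm ε).inter (hHitm ε))
    intro ε _ ε' _ hne
    rw [Function.onFun, Set.disjoint_iff_inter_eq_empty]
    ext ω
    simp only [Set.mem_inter_iff, Set.mem_setOf_eq, Set.mem_empty_iff_false, iff_false]
    rintro ⟨⟨h1, _⟩, ⟨h2, _⟩⟩
    apply hne
    funext i
    have e1 := h1 i.1 i.2
    have e2 := h2 i.1 i.2
    simp only [SSLE.ext, dif_pos i.2] at e1 e2
    rw [← e1, ← e2]
  have hterm : ∀ ε : Fin n → Bool,
      ℙ ({ω : Ω | ∀ i < n, pat step ω i = ext n ε i}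
        ∩ {ω : Ω | ∃ j, -psum (ext n ε) n ≤ psum (fun i => pat step ω (n + i)) j})
      = ENNReal.ofReal (if n ≤ 2 * ucnt (ext n ε) n
          then α ^ (ucnt (ext n ε) n) * (1-α) ^ (n - ucnt (ext n ε) n)
          else α ^ (n - ucnt (ext n ε) n) * (1-α) ^ (ucnt (ext n ε) n)) := by
    intro ε
    have h1 := meas_front_hit hmeas hindep hup h0 n ε (-psum (ext n ε) n)
    have hfr : ℙ {ω : Ω | ∀ i < n, pat step ω i = ext n ε i}
        = ENNReal.ofReal (α ^ (ucnt (ext n ε) n) * (1-α) ^ (n - ucnt (ext n ε) n)) := by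
      have hs : {ω : Ω | ∀ i < n, pat step ω i = ext n ε i}
          = {ω : Ω | ∀ i < n, pat step ω (0 + i) = ext n ε i} := by
        ext ω; simp
      rw [hs, meas_cyl_offset hmeas hindep hup h0 0 n (ext n ε),
        ← ENNReal.ofReal_prod_of_nonneg (fun l _ => bp_nonneg h0 hα1 _), prod_bp]
    have hpe := psum_eq_ucnt (ext n ε) n
    by_cases hcase : n ≤ 2 * ucnt (ext n ε) n
    · have hh : {ω : Ω | ∃ j, -psum (ext n ε) n
          ≤ psum (fun i => pat step ω (n + i)) j} = Set.univ := by
        ext ω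
        simp only [Set.mem_setOf_eq, Set.mem_univ, iff_true]
        exact ⟨0, by rw [psum_zero]; omega⟩
      rw [h1, hfr, hh, measure_univ, mul_one, if_pos hcase]
    · set u := ucnt (ext n ε) n with hu
      set w : ℕ := n - 2 * u with hw
      have hw1 : 1 ≤ w := by omega
      have hvw : -psum (ext n ε) n = (w : ℤ) := by
        rw [hpe]; push_cast; omega
      have h1α : (0:ℝ) ≤ 1 - α := by linarith
      rw [h1, hfr, hvw, meas_hit hmeas hindep hup hα0 hα n w hw1,
        ← ENNReal.ofReal_mul (by positivity), if_neg hcase]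
      congr 1
      exact case2_weight hα0 (by linarith) (by omega)
  rw [hPE, hsum]
  have hnn : ∀ ε ∈ (Finset.univ : Finset (Fin n → Bool)),
      (0:ℝ) ≤ (if n ≤ 2 * ucnt (ext n ε) n
          then α ^ (ucnt (ext n ε) n) * (1-α) ^ (n - ucnt (ext n ε) n)
          else α ^ (n - ucnt (ext n ε) n) * (1-α) ^ (ucnt (ext n ε) n)) := by
    intro ε _
    have h1α : (0:ℝ) ≤ 1 - α := by linarith
    split_ifs <;> positivity
  rw [Finset.sum_congr rfl (fun ε _ => hterm ε), ← ENNReal.ofReal_sum_of_nonneg hnn,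
    final_algebra α n]
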